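/- Let p : G → ℝ be a nonzero pseudocharacter. Let C > 0 be any constant such that the defect of p is at most C/2 and there exists a value of p in the interval (0, C/2). Set X = {g ∈ G : |p(g)| < C}. Then X generates G, and the map p : (G, d_X) → ℝ is a quasi-isometry. -/

import Mathlib

noncomputable section

open Metric

/-- The Gromov product of `x` and `y` at `w` with respect to a distance function `d`. -/
def gromovProd {α : Type*} (d : α → α → ℝ) (w x y : α) : ℝ :=
  (d w x + d w y - d x y) / 2

/-- Gromov hyperbolicity via the four-point condition, for an arbitrary distance function. -/
def FourPointHyperbolic {α : Type*} (d : α → α → ℝ) : Prop :=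
  ∃ δ : ℝ, 0 ≤ δ ∧ ∀ w x y z : α,
    min (gromovProd d w x z) (gromovProd d w z y) - δ ≤ gromovProd d w x y

/-- A geodesic from `x` to `y`, parametrized by arc length on `[0, dist x y]`. -/
def IsGeodesicSeg {X : Type*} [MetricSpace X] (x y : X) (f : ℝ → X) : Prop :=
  f 0 = x ∧ f (dist x y) = y ∧
    ∀ s ∈ Set.Icc (0 : ℝ) (dist x y), ∀ t ∈ Set.Icc (0 : ℝ) (dist x y),
      dist (f s) (f t) = |s - t|

/-- A geodesic metric space: any two points are joined by a geodesic. -/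
def GeodesicSpace (X : Type*) [MetricSpace X] : Prop :=
  ∀ x y : X, ∃ f : ℝ → X, IsGeodesicSeg x y f

/-- The image (as a set) of a geodesic segment from `x` to `y`. -/
def geodSet {X : Type*} [MetricSpace X] (x y : X) (f : ℝ → X) : Set X :=
  f '' Set.Icc (0 : ℝ) (dist x y)

/-- `p` lies within distance `δ` of the set `S` (i.e. in the closed `δ`-neighborhood). -/
def WithinDistOf {X : Type*} [MetricSpace X] (δ : ℝ) (p : X) (S : Set X) : Prop :=
  ∃ q ∈ S, dist p q ≤ δ

/-- Rips condition: each side of every geodesic triangle is contained in the union of the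
closed `δ`-neighborhoods of the other two sides. -/
def RipsHyperbolic (X : Type*) [MetricSpace X] (δ : ℝ) : Prop :=
  ∀ x y z : X, ∀ fxy fyz fxz : ℝ → X,
    IsGeodesicSeg x y fxy → IsGeodesicSeg y z fyz → IsGeodesicSeg x z fxz →
      (∀ p ∈ geodSet x y fxy, WithinDistOf δ p (geodSet y z fyz ∪ geodSet x z fxz)) ∧
      (∀ p ∈ geodSet y z fyz, WithinDistOf δ p (geodSet x y fxy ∪ geodSet x z fxz)) ∧
      (∀ p ∈ geodSet x z fxz, WithinDistOf δ p (geodSet x y fxy ∪ geodSet y z fyz))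

/-- An (isometric) action of a group `G` on a metric space `X`. -/
structure IsIsomAction (G : Type*) [Group G] (X : Type*) [MetricSpace X]
    (act : G → X → X) : Prop where
  act_one : ∀ x : X, act 1 x = x
  act_mul : ∀ (g h : G) (x : X), act (g * h) x = act g (act h x)
  isometry : ∀ (g : G) (x y : X), dist (act g x) (act g y) = dist x y

/-- A cobounded action: some (hence any) orbit is coarsely dense. -/
def CoboundedAction {G X : Type*} [Group G] [MetricSpace X] (act : G → X → X) : Prop :=
  ∃ (x : X) (R : ℝ), 0 ≤ R ∧ ∀ y : X, ∃ g : G, dist y (act g x) ≤ R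

/-- A quasi-isometric embedding between two "spaces" given by distance functions. -/
def IsQIEmbWith {α β : Type*} (dα : α → α → ℝ) (dβ : β → β → ℝ) (f : α → β) : Prop :=
  ∃ A B : ℝ, 1 ≤ A ∧ 0 ≤ B ∧ ∀ x y : α,
    dα x y / A - B ≤ dβ (f x) (f y) ∧ dβ (f x) (f y) ≤ A * dα x y + B

/-- The image of `f` is coarsely dense. -/
def CoarselyDenseWith {α β : Type*} (dβ : β → β → ℝ) (f : α → β) : Prop :=
  ∃ C : ℝ, 0 ≤ C ∧ ∀ y : β, ∃ x : α, dβ (f x) y ≤ C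

/-- A quasi-isometry between two "spaces" given by distance functions. -/
def IsQuasiIsometryWith {α β : Type*} (dα : α → α → ℝ) (dβ : β → β → ℝ) (f : α → β) : Prop :=
  IsQIEmbWith dα dβ f ∧ CoarselyDenseWith dβ f

/-- The standard distance on `ℤ`. -/
def zdist : ℤ → ℤ → ℝ := fun m n => |(m : ℝ) - (n : ℝ)|

/-- `g` is loxodromic for the action `act`: for some basepoint `x`, the orbit map
`n ↦ g ^ n • x` is a quasi-isometric embedding of `ℤ`. -/
def LoxodromicWith {G α : Type*} [Group G] (d : α → α → ℝ) (act : G → α → α) (g : G) : Prop :=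
  ∃ x : α, IsQIEmbWith zdist d (fun n : ℤ => act (g ^ n) x)

/-- Acylindricity of an action, with respect to a distance function. -/
def AcylindricalWith {G α : Type*} (d : α → α → ℝ) (act : G → α → α) : Prop :=
  ∀ ε : ℝ, 0 < ε → ∃ (R : ℝ) (N : ℕ), 0 ≤ R ∧ ∀ x y : α, R ≤ d x y →
    {g : G | d x (act g x) ≤ ε ∧ d y (act g y) ≤ ε}.Finite ∧
    Nat.card {g : G | d x (act g x) ≤ ε ∧ d y (act g y) ≤ ε} ≤ N

/-- Two subsets are within finite Hausdorff distance of each other. -/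
def FinHausdorffClose {α : Type*} (d : α → α → ℝ) (A B : Set α) : Prop :=
  ∃ C : ℝ, (∀ a ∈ A, ∃ b ∈ B, d a b ≤ C) ∧ (∀ b ∈ B, ∃ a ∈ A, d a b ≤ C)

/-- The positive (`pos = true`) or negative (`pos = false`) orbit ray of `g` at `x`. -/
def orbitRay {G α : Type*} [Group G] (act : G → α → α) (g : G) (x : α) (pos : Bool) : Set α :=
  Set.range fun n : ℕ => act (g ^ (if pos then (n : ℤ) else -(n : ℤ))) x

/-- Independence of two loxodromic elements with respect to the basepoint `x`: no orbit ray of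
`g` is within finite Hausdorff distance of an orbit ray of `h`. -/
def IndepWith {G α : Type*} [Group G] (d : α → α → ℝ) (act : G → α → α) (x : α)
    (g h : G) : Prop :=
  ∀ s t : Bool, ¬ FinHausdorffClose d (orbitRay act g x s) (orbitRay act h x t)

/-- A group is virtually cyclic if it has a cyclic subgroup of finite index. -/
def VirtuallyCyclic (G : Type*) [Group G] : Prop :=
  ∃ H : Subgroup G, IsCyclic ↥H ∧ H.FiniteIndex

/-- `S` is a generating set of `G`. -/
def IsGenSet {G : Type*} [Group G] (S : Set G) : Prop :=
  Subgroup.closure S = ⊤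

/-- The word length of `g` with respect to `S`: the least `n` such that `g` is a product of
`n` elements of `S ∪ S⁻¹`. -/
def wordLength {G : Type*} [Group G] (S : Set G) (g : G) : ℕ :=
  sInf {n : ℕ | ∃ l : List G, l.length = n ∧ (∀ s ∈ l, s ∈ S ∨ s⁻¹ ∈ S) ∧ l.prod = g}

/-- The word metric `d_S(g,h) = ‖g⁻¹h‖_S` on `G`. -/
def wordDist {G : Type*} [Group G] (S : Set G) : G → G → ℝ :=
  fun g h => (wordLength S (g⁻¹ * h) : ℝ)

/-- `S ⪯ T` : `S` is dominated by `T`, i.e. `sup_{t ∈ T} ‖t‖_S < ∞`. -/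
def GenSetDominated {G : Type*} [Group G] (S T : Set G) : Prop :=
  ∃ M : ℕ, ∀ t ∈ T, wordLength S t ≤ M

/-- Equivalence of generating sets: mutual domination. -/
def GenSetEquiv {G : Type*} [Group G] (S T : Set G) : Prop :=
  GenSetDominated S T ∧ GenSetDominated T S

/-- The left multiplication action of a group on itself. -/
def leftTranslation {G : Type*} [Group G] : G → G → G := fun g x => g * x

universe uX uG

/-- A bundled isometric action of `G` on a geodesic, δ-hyperbolic (Rips condition)
metric space. -/
structure GrpActHypSpace (G : Type uG) [Group G] : Type (max uG (uX + 1)) where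
  carrier : Type uX
  [inst : MetricSpace carrier]
  act : G → carrier → carrier
  isIsomAction : IsIsomAction G carrier act
  δ : ℝ
  δ_nonneg : 0 ≤ δ
  geodesic : GeodesicSpace carrier
  rips : RipsHyperbolic carrier δ

attribute [instance] GrpActHypSpace.inst

/-- Property (NL): no isometric action of `G` on a geodesic Gromov-hyperbolic metric space
has a loxodromic element. -/
def PropNL (G : Type uG) [Group G] : Prop :=
  ∀ A : GrpActHypSpace.{uX, uG} G, ∀ g : G,
    ¬ LoxodromicWith (fun a b : A.carrier => dist a b) A.act g

/-- [ABO, Lemma 4.15]. -/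
theorem stmt_1 {G : Type*} [Group G] (p : G → ℝ)
    (hhom : ∀ (g : G) (n : ℤ), p (g ^ n) = n * p g)
    (hnonzero : ∃ g : G, p g ≠ 0)
    (C : ℝ) (hC : 0 < C)
    (hdefect : ∀ g h : G, |p (g * h) - p g - p h| ≤ C / 2)
    (hvalue : ∃ g : G, p g ∈ Set.Ioo (0 : ℝ) (C / 2)) :
    IsGenSet {g : G | |p g| < C} ∧
    IsQuasiIsometryWith (wordDist {g : G | |p g| < C}) (fun a b : ℝ => dist a b) p := by
  obtain ⟨s, hsm⟩ := hvalue
  obtain ⟨hs1, hs2⟩ := hsm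
  have hp1 : p 1 = 0 := by
    have h := hhom 1 (0 : ℤ); simpa using h
  have hpinv : ∀ g : G, p g⁻¹ = -p g := fun g => by
    have h := hhom g (-1 : ℤ); simpa using h
  have hpz : ∀ n : ℤ, p (s ^ n) = n * p s := fun n => hhom s n
  have hsX : s ∈ {g : G | |p g| < C} := by
    show |p s| < C
    rw [abs_of_pos hs1]; linarith
  have hround : ∀ y : ℝ, |(round (y / p s) : ℝ) * p s - y| ≤ p s / 2 := by
    intro y
    have h1 : |y / p s - (round (y / p s) : ℝ)| ≤ 1 / 2 := abs_sub_round _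
    have h2 : (y / p s - (round (y / p s) : ℝ)) * p s = y - (round (y / p s) : ℝ) * p s := by
      field_simp
    calc |(round (y / p s) : ℝ) * p s - y|
        = |y / p s - (round (y / p s) : ℝ)| * |p s| := by rw [← abs_mul, h2, abs_sub_comm]
      _ ≤ 1 / 2 * p s := by
          rw [abs_of_pos hs1]
          exact mul_le_mul_of_nonneg_right h1 (le_of_lt hs1)
      _ = p s / 2 := by ring
  -- decomposition: g = (g * s^(-n)) * s^n with the first factor in X
  have hdecomp : ∀ g : G, ∃ n : ℤ, |p (g * s ^ (-n))| < C ∧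
      (n.natAbs : ℝ) ≤ |p g| / p s + 1 / 2 := by
    intro g
    refine ⟨round (p g / p s), ?_, ?_⟩
    · have hd := hdefect g (s ^ (-(round (p g / p s))))
      have hz : p (s ^ (-(round (p g / p s)))) = -((round (p g / p s) : ℝ)) * p s := by
        rw [hpz]; push_cast; ring
      rw [hz] at hd
      have hd' := abs_le.mp hd
      have h4 := abs_le.mp (hround (p g))
      rw [abs_lt]
      constructor <;> linarith [hd'.1, hd'.2, h4.1, h4.2]
    · have h3 := abs_le.mp (abs_sub_round (p g / p s))
      have h5 : ((round (p g / p s)).natAbs : ℝ) = |((round (p g / p s)) : ℝ)| := by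
        rw [Nat.cast_natAbs]; exact Int.cast_abs
      rw [h5]
      have h6 : |p g / p s| = |p g| / p s := by
        rw [abs_div, abs_of_pos hs1]
      have h7 := le_abs_self (p g / p s)
      have h8 := neg_abs_le (p g / p s)
      rw [abs_le]
      constructor <;> [linarith [h3.1, h3.2, h6 ▸ h7, h6 ▸ h8, abs_nonneg (p g / p s), div_nonneg (abs_nonneg (p g)) hs1.le]; linarith [h3.1, h3.2, h6 ▸ h7, h6 ▸ h8]]
  -- a short word representing any g
  have hXset : ∀ g : G, ∃ m : ℕ, (m : ℝ) ≤ |p g| / p s + 3 / 2 ∧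
      m ∈ {n : ℕ | ∃ l : List G, l.length = n ∧
        (∀ a ∈ l, a ∈ {g : G | |p g| < C} ∨ a⁻¹ ∈ {g : G | |p g| < C}) ∧ l.prod = g} := by
    intro g
    obtain ⟨n, hx, hnb⟩ := hdecomp g
    refine ⟨n.natAbs + 1, by push_cast; linarith, ?_⟩
    refine ⟨(g * s ^ (-n)) :: List.replicate n.natAbs (if 0 ≤ n then s else s⁻¹), ?_, ?_, ?_⟩
    · simp
    · intro a ha
      rcases List.mem_cons.mp ha with h | h
      · left; rw [h]; exact hx
      · have := List.eq_of_mem_replicate h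
        by_cases hn : 0 ≤ n
        · rw [if_pos hn] at this; left; rw [this]; exact hsX
        · rw [if_neg hn] at this; right; rw [this, inv_inv]; exact hsX
    · rw [List.prod_cons, List.prod_replicate]
      have ht : (if 0 ≤ n then s else s⁻¹) ^ n.natAbs = s ^ n := by
        by_cases hn : 0 ≤ n
        · rw [if_pos hn, ← zpow_natCast]
          congr 1; omega
        · rw [if_neg hn, ← zpow_natCast, inv_zpow, ← zpow_neg]
          congr 1; omega
      rw [ht]; group
  have hwl : ∀ g : G, (wordLength {g : G | |p g| < C} g : ℝ) ≤ |p g| / p s + 3 / 2 := by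
    intro g
    obtain ⟨m, hm1, hm2⟩ := hXset g
    have h := Nat.sInf_le hm2
    exact le_trans (Nat.cast_le.mpr h) hm1
  have hne : ∀ g : G, ∃ l : List G, l.length = wordLength {g : G | |p g| < C} g ∧
      (∀ a ∈ l, a ∈ {g : G | |p g| < C} ∨ a⁻¹ ∈ {g : G | |p g| < C}) ∧ l.prod = g := by
    intro g
    obtain ⟨m, _, hm2⟩ := hXset g
    exact Nat.sInf_mem ⟨m, hm2⟩
  have hprod : ∀ l : List G,
      (∀ a ∈ l, a ∈ {g : G | |p g| < C} ∨ a⁻¹ ∈ {g : G | |p g| < C}) →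
      |p l.prod| ≤ (3 * C / 2) * l.length := by
    intro l
    induction l with
    | nil => intro _; simp [hp1]
    | cons a l ih =>
      intro h
      have ha : |p a| ≤ C := by
        rcases h a List.mem_cons_self with h' | h'
        · exact le_of_lt h'
        · have h'' : |p a⁻¹| < C := h'
          rw [hpinv, abs_neg] at h''
          exact le_of_lt h''
      have hl := ih (fun b hb => h b (List.mem_cons_of_mem a hb))
      have hd := abs_le.mp (hdefect a l.prod)
      have ha' := abs_le.mp ha
      rw [List.prod_cons, abs_le]
      push_cast [List.length_cons]
      constructor <;>
        nlinarith [le_abs_self (p l.prod), neg_abs_le (p l.prod), hd.1, hd.2, ha'.1, ha'.2,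
          Nat.cast_nonneg (α := ℝ) l.length]
  constructor
  · -- generation
    rw [IsGenSet, Subgroup.eq_top_iff']
    intro g
    obtain ⟨n, hx, -⟩ := hdecomp g
    have hxg : g = (g * s ^ (-n)) * s ^ n := by group
    rw [hxg]
    exact mul_mem (Subgroup.subset_closure hx)
      (zpow_mem (Subgroup.subset_closure hsX) n)
  constructor
  · -- QI embedding
    refine ⟨max (3 * C / 2) (max (1 / p s) 1), C + 2, ?_, by linarith, ?_⟩
    · exact le_trans (le_max_right _ _) (le_max_right _ _)
    intro x y
    set A := max (3 * C / 2) (max (1 / p s) 1) with hA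
    have hA1 : (1 : ℝ) ≤ A := le_trans (le_max_right _ _) (le_max_right _ _)
    have hA2 : 3 * C / 2 ≤ A := le_max_left _ _
    have hA3 : 1 / p s ≤ A := le_trans (le_max_left _ _) (le_max_right _ _)
    have hApos : (0 : ℝ) < A := lt_of_lt_of_le one_pos hA1
    have hxk : x * (x⁻¹ * y) = y := by group
    have hdk := hdefect x (x⁻¹ * y)
    rw [hxk] at hdk
    have hdk' := abs_le.mp hdk
    obtain ⟨l, hl1, hl2, hl3⟩ := hne (x⁻¹ * y)
    have hpk : |p (x⁻¹ * y)| ≤ (3 * C / 2) * (wordLength {g : G | |p g| < C} (x⁻¹ * y) : ℝ) := by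
      have h := hprod l hl2
      rw [hl3, hl1] at h
      exact h
    have hwlk := hwl (x⁻¹ * y)
    have hw0 : (0 : ℝ) ≤ (wordLength {g : G | |p g| < C} (x⁻¹ * y) : ℝ) := Nat.cast_nonneg _
    have hpk0 := abs_nonneg (p (x⁻¹ * y))
    simp only [wordDist, Real.dist_eq]
    constructor
    · -- lower bound
      have h5 : |p (x⁻¹ * y)| ≤ |p x - p y| + C / 2 := by
        rw [abs_le]
        constructor <;> linarith [le_abs_self (p x - p y), neg_abs_le (p x - p y), hdk'.1, hdk'.2]
      have h6 : |p (x⁻¹ * y)| / p s ≤ A * |p (x⁻¹ * y)| := by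
        rw [div_eq_mul_one_div]
        calc |p (x⁻¹ * y)| * (1 / p s) ≤ |p (x⁻¹ * y)| * A :=
              mul_le_mul_of_nonneg_left hA3 hpk0
          _ = A * |p (x⁻¹ * y)| := mul_comm _ _
      have h7 : A * |p (x⁻¹ * y)| ≤ A * (|p x - p y| + C / 2) :=
        mul_le_mul_of_nonneg_left h5 hApos.le
      rw [sub_le_iff_le_add, div_le_iff₀ hApos]
      nlinarith [abs_nonneg (p x - p y)]
    · -- upper bound
      have h8 : |p x - p y| ≤ |p (x⁻¹ * y)| + C / 2 := by
        rw [abs_le]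
        constructor <;> linarith [le_abs_self (p (x⁻¹ * y)), neg_abs_le (p (x⁻¹ * y)), hdk'.1, hdk'.2]
      have h9 : (3 * C / 2) * (wordLength {g : G | |p g| < C} (x⁻¹ * y) : ℝ) ≤
          A * (wordLength {g : G | |p g| < C} (x⁻¹ * y) : ℝ) :=
        mul_le_mul_of_nonneg_right hA2 hw0
      linarith
  · -- coarsely dense
    refine ⟨C, hC.le, ?_⟩
    intro y
    refine ⟨s ^ round (y / p s), ?_⟩
    have h := hround y
    simp only [Real.dist_eq, hpz]
    linarith
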